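/- Let (A_i)_{i∈I} be a POVM on a finite-dimensional complex Hilbert space H measured via its Lüders channel, and let ψ be a unit vector. Then Σ_i ⟨ψ, A_i^{1/2} ψ⟩² ≥ Σ_i ⟨ψ, A_i ψ⟩²; equivalently, the fidelity-based disturbance D_F(A;ψ) = 1 − Σ_i ⟨ψ, A_i^{1/2} ψ⟩² is at most the Tsallis-T_2 uncertainty T_2(A;ψ) = 1 − Σ_i ⟨ψ, A_i ψ⟩² of the outcome distribution. In particular, T_2(A;ψ) = 0 implies D_F(A;ψ) = 0. -/

import Mathlib

open Matrix
open scoped ComplexOrder InnerProductSpace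

/-- The square root of a positive semidefinite matrix, as defined in the older Mathlib
(`Matrix.PosSemidef.sqrt`, since removed). -/
noncomputable def Matrix.PosSemidef.sqrt {n : Type*} [Fintype n] [DecidableEq n]
    {A : Matrix n n ℂ} (hA : A.PosSemidef) : Matrix n n ℂ :=
  (hA.1.eigenvectorUnitary : Matrix n n ℂ) *
    diagonal (fun i => ((Real.sqrt (hA.1.eigenvalues i) : ℝ) : ℂ)) *
    (star hA.1.eigenvectorUnitary : Matrix n n ℂ)

lemma spectral_theorem' {n : ℕ} {A : Matrix (Fin n) (Fin n) ℂ} (hA : A.IsHermitian) :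
    A = (hA.eigenvectorUnitary : Matrix (Fin n) (Fin n) ℂ) *
      diagonal (RCLike.ofReal ∘ hA.eigenvalues) *
      (star hA.eigenvectorUnitary : Matrix (Fin n) (Fin n) ℂ) := by
  conv_lhs => rw [hA.spectral_theorem]
  simp [Unitary.conjStarAlgAut_apply]

lemma Matrix.PosSemidef.posSemidef_sqrt {n : ℕ} {A : Matrix (Fin n) (Fin n) ℂ}
    (hA : A.PosSemidef) : hA.sqrt.PosSemidef := by
  unfold Matrix.PosSemidef.sqrt
  apply Matrix.PosSemidef.mul_mul_conjTranspose_same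
  refine posSemidef_diagonal_iff.mpr fun k => ?_
  rw [Complex.zero_le_real]
  exact Real.sqrt_nonneg _

lemma Matrix.PosSemidef.sqrt_mul_self {n : ℕ} {A : Matrix (Fin n) (Fin n) ℂ}
    (hA : A.PosSemidef) : hA.sqrt * hA.sqrt = A := by
  unfold Matrix.PosSemidef.sqrt
  have hU : (star hA.1.eigenvectorUnitary : Matrix (Fin n) (Fin n) ℂ) *
      (hA.1.eigenvectorUnitary : Matrix (Fin n) (Fin n) ℂ) = 1 :=
    Unitary.star_mul_self_of_mem hA.1.eigenvectorUnitary.2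
  conv_rhs => rw [spectral_theorem' hA.1]
  simp only [Matrix.mul_assoc]
  rw [← Matrix.mul_assoc (star _ : Matrix (Fin n) (Fin n) ℂ) _ _, hU, Matrix.one_mul,
    ← Matrix.mul_assoc (diagonal _) (diagonal _), diagonal_mul_diagonal]
  congr 3
  funext k
  simp only [Function.comp_apply, RCLike.ofReal, Complex.coe_algebraMap]
  rw [← Complex.ofReal_mul, Real.mul_self_sqrt (hA.eigenvalues_nonneg k)]

lemma eig_le_one {n : ℕ} {A : Matrix (Fin n) (Fin n) ℂ} (hA : A.PosSemidef)
    (h1 : (1 - A).PosSemidef) (k : Fin n) : hA.1.eigenvalues k ≤ 1 := by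
  have hv := h1.re_dotProduct_nonneg (hA.1.eigenvectorBasis k)
  set v : EuclideanSpace ℂ (Fin n) := hA.1.eigenvectorBasis k with hvdef
  have hnorm : RCLike.re (star (⇑v) ⬝ᵥ (⇑v)) = 1 := by
    have h1' : ‖v‖ = 1 := hA.1.eigenvectorBasis.orthonormal.1 k
    have h2 : (⟪v, v⟫_ℂ).re = 1 := by
      rw [inner_self_eq_norm_sq_to_K]; simp [h1']
    rw [EuclideanSpace.inner_eq_star_dotProduct, dotProduct_comm] at h2
    exact h2
  have heq : hA.1.eigenvalues k = RCLike.re (star (⇑v) ⬝ᵥ A *ᵥ ⇑v) := hA.1.eigenvalues_eq k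
  rw [sub_mulVec, one_mulVec, dotProduct_sub] at hv
  simp only [map_sub] at hv
  rw [heq]
  have key : RCLike.re (star (⇑v) ⬝ᵥ A *ᵥ ⇑v) ≤ RCLike.re (star (⇑v) ⬝ᵥ (⇑v)) :=
    sub_nonneg.mp hv
  rw [hnorm] at key
  exact key

lemma sqrt_sub_posSemidef {n : ℕ} {A : Matrix (Fin n) (Fin n) ℂ} (hA : A.PosSemidef)
    (h1 : (1 - A).PosSemidef) : (hA.sqrt - A).PosSemidef := by
  have key : hA.sqrt - A =
      hA.1.eigenvectorUnitary.1 *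
        diagonal (fun k => ((Real.sqrt (hA.1.eigenvalues k) - hA.1.eigenvalues k : ℝ) : ℂ)) *
        (star hA.1.eigenvectorUnitary.1 : Matrix (Fin n) (Fin n) ℂ) := by
    have hd : (diagonal (fun k => ((Real.sqrt (hA.1.eigenvalues k) - hA.1.eigenvalues k : ℝ) : ℂ))
        : Matrix (Fin n) (Fin n) ℂ)
        = diagonal ((↑) ∘ Real.sqrt ∘ hA.1.eigenvalues) - diagonal (RCLike.ofReal ∘ hA.1.eigenvalues) := by
      rw [diagonal_sub]
      congr 1
      funext k
      simp [Complex.ofReal_sub]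
    rw [hd, mul_sub, sub_mul, Matrix.PosSemidef.sqrt]
    congr 1
    exact spectral_theorem' hA.1
  rw [key]
  apply Matrix.PosSemidef.mul_mul_conjTranspose_same
  · refine posSemidef_diagonal_iff.mpr fun k => ?_
    rw [Complex.zero_le_real]
    have h0 := hA.eigenvalues_nonneg k
    have h2 := eig_le_one hA h1 k
    nlinarith [Real.sq_sqrt h0, Real.sqrt_nonneg (hA.1.eigenvalues k),
      Real.le_sqrt h0 (le_refl _)]

/-- For a POVM `(A i)` measured via its Lüders channel and a unit
vector `ψ`, `∑ i ⟨ψ, √(A i) ψ⟩² ≥ ∑ i ⟨ψ, A i ψ⟩²`; equivalently the fidelity-based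
disturbance `D_F = 1 - ∑ i ⟨ψ, √(A i) ψ⟩²` is at most the Tsallis-`T₂` uncertainty
`T₂ = 1 - ∑ i ⟨ψ, A i ψ⟩²`. In particular `T₂ = 0` implies `D_F = 0`. -/
theorem lueders_disturbance_le_tsallis {n : ℕ} {I : Type*} [Fintype I]
    (A : I → Matrix (Fin n) (Fin n) ℂ)
    (hA : ∀ i, (A i).PosSemidef)
    (hsum : ∑ i, A i = 1)
    (ψ : Fin n → ℂ) (hψ : star ψ ⬝ᵥ ψ = 1) :
    (∑ i, ((star ψ ⬝ᵥ (hA i).sqrt *ᵥ ψ).re) ^ 2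
        ≥ ∑ i, ((star ψ ⬝ᵥ (A i) *ᵥ ψ).re) ^ 2) ∧
    (1 - ∑ i, ((star ψ ⬝ᵥ (A i) *ᵥ ψ).re) ^ 2 = 0 →
      1 - ∑ i, ((star ψ ⬝ᵥ (hA i).sqrt *ᵥ ψ).re) ^ 2 = 0) := by
  classical
  set p : I → ℝ := fun i => (star ψ ⬝ᵥ (A i) *ᵥ ψ).re with hpdef
  set q : I → ℝ := fun i => (star ψ ⬝ᵥ (hA i).sqrt *ᵥ ψ).re with hqdef
  have hone : ∀ i, (1 - A i).PosSemidef := by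
    intro i
    have he : 1 - A i = ∑ j ∈ Finset.univ.erase i, A j := by
      rw [Finset.sum_erase_eq_sub (Finset.mem_univ i), hsum]
    rw [he]
    exact Finset.sum_induction _ _ (fun a b ha hb => ha.add hb) Matrix.PosSemidef.zero
      (fun j _ => hA j)
  have hp0 : ∀ i, 0 ≤ p i := fun i => (hA i).re_dotProduct_nonneg ψ
  have hq0 : ∀ i, 0 ≤ q i := fun i => (hA i).posSemidef_sqrt.re_dotProduct_nonneg ψ
  have hqp : ∀ i, p i ≤ q i := by
    intro i
    have h := (sqrt_sub_posSemidef (hA i) (hone i)).re_dotProduct_nonneg ψ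
    rw [sub_mulVec, dotProduct_sub, map_sub] at h
    have : (0:ℝ) ≤ q i - p i := h
    linarith
  have hq2p : ∀ i, q i ^ 2 ≤ p i := by
    intro i
    set x : EuclideanSpace ℂ (Fin n) := (WithLp.equiv 2 _).symm ψ with hxdef
    set y : EuclideanSpace ℂ (Fin n) := (WithLp.equiv 2 _).symm ((hA i).sqrt *ᵥ ψ) with hydef
    have hxy : ⟪x, y⟫_ℂ = star ψ ⬝ᵥ (hA i).sqrt *ᵥ ψ :=
      (EuclideanSpace.inner_toLp_toLp ψ ((hA i).sqrt *ᵥ ψ)).trans (dotProduct_comm _ _)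
    have hxx : ⟪x, x⟫_ℂ = (1:ℂ) := by
      show dotProduct ψ (star ψ) = 1
      rw [dotProduct_comm, hψ]
    have hyy : ⟪y, y⟫_ℂ = star ψ ⬝ᵥ (A i) *ᵥ ψ := by
      show dotProduct ((hA i).sqrt *ᵥ ψ) (star ((hA i).sqrt *ᵥ ψ)) = _
      rw [dotProduct_comm, star_mulVec,
        (hA i).posSemidef_sqrt.1, ← dotProduct_mulVec, mulVec_mulVec,
        (hA i).sqrt_mul_self]
    have hx1 : ‖x‖ = 1 := by
      have h1 : RCLike.re ⟪x, x⟫_ℂ = ‖x‖ ^ 2 := inner_self_eq_norm_sq x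
      rw [hxx] at h1
      have h2 : (‖x‖:ℝ) ^ 2 = 1 := by simpa using h1.symm
      nlinarith [norm_nonneg x]
    have hy2 : ‖y‖ ^ 2 = p i := by
      have h1 : RCLike.re ⟪y, y⟫_ℂ = ‖y‖ ^ 2 := inner_self_eq_norm_sq y
      rw [hyy] at h1
      exact h1.symm
    have hcs : ‖⟪x, y⟫_ℂ‖ ≤ ‖x‖ * ‖y‖ := norm_inner_le_norm x y
    have hqle : q i ≤ ‖y‖ := by
      have : q i ≤ ‖⟪x, y⟫_ℂ‖ := by
        rw [hxy] at *
        exact Complex.re_le_norm _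
      rw [hx1, one_mul] at hcs
      linarith
    calc q i ^ 2 ≤ ‖y‖ ^ 2 := by
          have := hq0 i
          nlinarith
      _ = p i := hy2
  have hsump : ∑ i, p i = 1 := by
    have h1 : ∑ i, (star ψ ⬝ᵥ (A i) *ᵥ ψ) = 1 := by
      have : ∑ i, (star ψ ⬝ᵥ (A i) *ᵥ ψ) = star ψ ⬝ᵥ (∑ i, A i) *ᵥ ψ := by
        simp only [mulVec, dotProduct, Matrix.sum_apply, Finset.sum_apply,
          Finset.sum_mul, Finset.mul_sum]
        rw [Finset.sum_comm]
        congr 1; funext k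
        rw [Finset.sum_comm]
      rw [this, hsum, one_mulVec, hψ]
    have := congrArg Complex.re h1
    simpa [Complex.re_sum] using this
  have part1 : ∑ i, q i ^ 2 ≥ ∑ i, p i ^ 2 :=
    Finset.sum_le_sum fun i _ => pow_le_pow_left₀ (hp0 i) (hqp i) 2
  refine ⟨part1, fun h => ?_⟩
  have hle : ∑ i, q i ^ 2 ≤ ∑ i, p i := Finset.sum_le_sum fun i _ => hq2p i
  linarith
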